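/- Let k ≥ 1 and let G be a factorization of the complete graph K_ℕ on a countably infinite vertex set into factors each isomorphic to the k-star S_k. Then there is at most one vertex of K_ℕ that is not a center of any member of G; consequently G is countably infinite. -/

import Mathlib

/-- The `k`-star `S_k`: the vertex-disjoint union of `k` countable stars, realized
on the vertex set `Fin k × ℕ`, where `(i, 0)` is the center of the `i`-th star. -/
def kStar (k : ℕ) : SimpleGraph (Fin k × ℕ) :=
  SimpleGraph.fromRel (fun a b => a.1 = b.1 ∧ a.2 = 0 ∧ b.2 ≠ 0)

/-- A set `𝒢` of graphs is a factorization of `Λ`: each member is a (spanning)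
subgraph of `Λ` and the edge sets of the members partition the edge set of `Λ`. -/
def IsFactorizationSet {V : Type*} (Λ : SimpleGraph V) (𝒢 : Set (SimpleGraph V)) : Prop :=
  (∀ Γ ∈ 𝒢, Γ ≤ Λ) ∧ ∀ e ∈ Λ.edgeSet, ∃! Γ, Γ ∈ 𝒢 ∧ e ∈ Γ.edgeSet

lemma kStar_adj {k : ℕ} (a b : Fin k × ℕ) :
    (kStar k).Adj a b ↔ a ≠ b ∧
      ((a.1 = b.1 ∧ a.2 = 0 ∧ b.2 ≠ 0) ∨ (b.1 = a.1 ∧ b.2 = 0 ∧ a.2 ≠ 0)) := by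
  simp [kStar, SimpleGraph.fromRel_adj]

lemma kStar_center_infinite {k : ℕ} (a : Fin k × ℕ) (h : a.2 = 0) :
    ((kStar k).neighborSet a).Infinite := by
  apply Set.infinite_of_injective_forall_mem (f := fun n : ℕ => ((a.1, n + 1) : Fin k × ℕ))
  · intro m n hmn
    simpa using hmn
  · intro n
    rw [SimpleGraph.mem_neighborSet, kStar_adj]
    refine ⟨?_, Or.inl ⟨rfl, h, by simp⟩⟩
    intro he
    have : a.2 = n + 1 := congrArg Prod.snd he
    omega

lemma kStar_noncenter {k : ℕ} (a : Fin k × ℕ) (h : a.2 ≠ 0) :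
    ¬ ((kStar k).neighborSet a).Infinite := by
  intro hinf
  apply hinf
  apply Set.Finite.subset (Set.finite_singleton ((a.1, 0) : Fin k × ℕ))
  intro b hb
  rw [SimpleGraph.mem_neighborSet, kStar_adj] at hb
  rcases hb.2 with ⟨_, h2, _⟩ | ⟨h1, h2, _⟩
  · exact absurd h2 h
  · simp [Prod.ext_iff, h1, h2]

lemma iso_neighbor_infinite {V W : Type*} {A : SimpleGraph V} {B : SimpleGraph W}
    (e : A ≃g B) (a : V) :
    (B.neighborSet (e a)).Infinite ↔ (A.neighborSet a).Infinite := by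
  rw [← Set.infinite_coe_iff, ← Set.infinite_coe_iff]
  exact (e.mapNeighborSet a).symm.infinite_iff

/-- if `𝒢` is a factorization of the complete graph `K_ℕ` into
`k`-stars (`k ≥ 1`), then at most one vertex of `K_ℕ` fails to be a center
(a vertex of infinite degree) of some member of `𝒢`; consequently `𝒢` is
countably infinite. -/
theorem stmt_13 (k : ℕ) (hk : 1 ≤ k) (𝒢 : Set (SimpleGraph ℕ))
    (hfac : IsFactorizationSet (⊤ : SimpleGraph ℕ) 𝒢)
    (hiso : ∀ Γ ∈ 𝒢, Nonempty (kStar k ≃g Γ)) :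
    {v : ℕ | ∀ Γ ∈ 𝒢, ¬ (Γ.neighborSet v).Infinite}.Subsingleton ∧
      𝒢.Countable ∧ 𝒢.Infinite := by
  obtain ⟨hle, huniq⟩ := hfac
  set S := {v : ℕ | ∀ Γ ∈ 𝒢, ¬ (Γ.neighborSet v).Infinite} with hS
  -- any edge of a member has an endpoint with infinite neighbor set
  have hedge : ∀ Γ ∈ 𝒢, ∀ u v : ℕ, Γ.Adj u v →
      (Γ.neighborSet u).Infinite ∨ (Γ.neighborSet v).Infinite := by
    intro Γ hΓ u v huv
    obtain ⟨e⟩ := hiso Γ hΓ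
    have ha : (kStar k).Adj (e.symm u) (e.symm v) := e.symm.map_adj_iff.mpr huv
    rcases (kStar_adj _ _).mp ha with ⟨_, ⟨_, h2, _⟩ | ⟨_, h2, _⟩⟩
    · left
      have := (iso_neighbor_infinite e (e.symm u)).mpr (kStar_center_infinite _ h2)
      simpa using this
    · right
      have := (iso_neighbor_infinite e (e.symm v)).mpr (kStar_center_infinite _ h2)
      simpa using this
  -- subsingleton
  have hsub : S.Subsingleton := by
    intro u hu v hv
    by_contra hne
    have hadj : (⊤ : SimpleGraph ℕ).Adj u v := hne
    obtain ⟨Γ, ⟨hΓ, hmem⟩, _⟩ := huniq s(u, v) hadj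
    have : Γ.Adj u v := hmem
    rcases hedge Γ hΓ u v this with h | h
    · exact hu Γ hΓ h
    · exact hv Γ hΓ h
  refine ⟨hsub, ?_, ?_⟩
  -- countable
  · have hne : ∀ Γ : 𝒢, ∃ s : Sym2 ℕ, s ∈ (Γ : SimpleGraph ℕ).edgeSet := by
      rintro ⟨Γ, hΓ⟩
      obtain ⟨e⟩ := hiso Γ hΓ
      refine ⟨s(e (⟨0, hk⟩, 0), e (⟨0, hk⟩, 1)), ?_⟩
      rw [SimpleGraph.mem_edgeSet]
      exact e.map_adj_iff.mpr ((kStar_adj _ _).mpr (by simp))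
    choose f hf using hne
    have hinj : Function.Injective f := by
      rintro ⟨Γ, hΓ⟩ ⟨Γ', hΓ'⟩ hff
      have h1 := hf ⟨Γ, hΓ⟩
      have h2 := hf ⟨Γ', hΓ'⟩
      rw [hff] at h1
      have htop : f ⟨Γ', hΓ'⟩ ∈ (⊤ : SimpleGraph ℕ).edgeSet :=
        SimpleGraph.edgeSet_mono (hle Γ' hΓ') h2
      obtain ⟨_, _, huni⟩ := huniq _ htop
      have := (huni Γ ⟨hΓ, h1⟩).trans (huni Γ' ⟨hΓ', h2⟩).symm
      exact Subtype.ext this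
    rw [← Set.countable_coe_iff]
    exact Function.Injective.countable hinj
  -- infinite
  · intro hfin
    have hcent : ∀ Γ ∈ 𝒢, {v : ℕ | (Γ.neighborSet v).Infinite}.Finite := by
      intro Γ hΓ
      obtain ⟨e⟩ := hiso Γ hΓ
      apply Set.Finite.subset ((Set.finite_range (fun i : Fin k => ((i, 0) : Fin k × ℕ))).image e)
      intro v hv
      have hv' : ((kStar k).neighborSet (e.symm v)).Infinite := by
        rw [← iso_neighbor_infinite e (e.symm v)]
        simpa using hv
      have h0 : (e.symm v).2 = 0 := by
        by_contra h
        exact kStar_noncenter _ h hv'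
      refine ⟨e.symm v, ⟨(e.symm v).1, ?_⟩, by simp⟩
      exact Prod.ext rfl h0.symm
    have hC : (⋃ Γ ∈ 𝒢, {v : ℕ | (Γ.neighborSet v).Infinite}).Finite :=
      hfin.biUnion hcent
    have huniv : (Set.univ : Set ℕ) ⊆ (⋃ Γ ∈ 𝒢, {v : ℕ | (Γ.neighborSet v).Infinite}) ∪ S := by
      intro v _
      by_cases h : ∃ Γ ∈ 𝒢, (Γ.neighborSet v).Infinite
      · obtain ⟨Γ, hΓ, hv⟩ := h
        exact Or.inl (Set.mem_biUnion hΓ hv)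
      · push_neg at h
        exact Or.inr fun Γ hΓ => Set.not_infinite.mpr (h Γ hΓ)
    have : (Set.univ : Set ℕ).Finite :=
      Set.Finite.subset (hC.union hsub.finite) huniv
    exact Set.infinite_univ this
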